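/- Let n = 2e + 1 be odd and let ({1,…,n}, E, A, L) be a pairing structure with exactly one free index, A = {q}, and e pairs. Let K > 0. Then there exists a constant C > 0, depending only on n and K, such that for all λ ∈ (0,1], ∫_{[-K,K]^{A∪L}} Π_{j=1}^n (λ + |S_j|)^{-1} d(k_m)_{m∈A∪L} ≤ C λ^{-e} (1 + log(1/λ))^{e+1}. -/

import Mathlib

open MeasureTheory

/-- A pairing structure on `{1, …, n}` is encoded by an involution `σ` of `Fin n`:
the free indices `A` are the fixed points, the set of left endpoints `L` is
`{j | j < σ j}`, and `(p, σ p)` with `p < σ p` are the pairs.  Given values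
`kA` on `A` and `kL` on `L`, `combine σ hσ kA kL : Fin n → ℝ` is the vector `k̃` with
`k̃_j = kA_j` for `j ∈ A`, `k̃_j = kL_j` for `j ∈ L`, and `k̃_q = -kL_p` when `q = σ p`,
`p < q`. -/
noncomputable def combine {n : ℕ} (σ : Equiv.Perm (Fin n)) (hσ : ∀ j, σ (σ j) = j)
    (kA : {j : Fin n // σ j = j} → ℝ) (kL : {j : Fin n // j < σ j} → ℝ) :
    Fin n → ℝ := fun j =>
  if h : σ j = j then kA ⟨j, h⟩
  else if h' : j < σ j then kL ⟨j, h'⟩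
  else -kL ⟨σ j, by
    have h2 : σ j < j := lt_of_le_of_ne (not_lt.mp h') h
    rw [hσ j]; exact h2⟩

/-- The partial sums `S_j = k̃_1 + ⋯ + k̃_j`. -/
noncomputable def partialSum {n : ℕ} (k : Fin n → ℝ) (j : Fin n) : ℝ :=
  ∑ i ∈ Finset.Iic j, k i

open Finset intervalIntegral Set
open scoped ENNReal


open MeasureTheory intervalIntegral Set

lemma posInt {l M : ℝ} (hl : 0 < l) (hM : 0 ≤ M) {α β : ℝ} (hα : 0 ≤ α) (hαβ : α ≤ β)
    (hd : β - α ≤ M) : ∫ u in α..β, (l + u)⁻¹ ≤ Real.log (1 + M / l) := by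
  have h1 : (∫ u in α..β, (l + u)⁻¹) = ∫ u in α..β, (u + l)⁻¹ := by
    simp_rw [add_comm l]
  have h2 : (∫ u in α..β, (u + l)⁻¹) = ∫ y in α + l..β + l, y⁻¹ :=
    (integral_comp_add_right (fun y => y⁻¹) l)
  have h3 : (0:ℝ) ∉ Set.uIcc (α + l) (β + l) := by
    rw [Set.uIcc_of_le (by linarith)]
    intro h
    have := h.1
    linarith
  rw [h1, h2, integral_inv h3]
  have hpos : 0 < α + l := by linarith
  have hratio : (β + l) / (α + l) ≤ 1 + M / l := by
    have : (1:ℝ) + M / l = (l + M) / l := by field_simp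
    rw [this, div_le_div_iff₀ hpos hl]
    nlinarith
  calc Real.log ((β + l) / (α + l)) ≤ Real.log (1 + M / l) :=
    Real.log_le_log (by apply div_pos <;> linarith) hratio

lemma realInt {l M : ℝ} (hl : 0 < l) {a b : ℝ} (hab : a ≤ b) (hM : b - a ≤ M) :
    ∫ u in a..b, (l + |u|)⁻¹ ≤ 2 * Real.log (1 + M / l) := by
  have hM0 : 0 ≤ M := le_trans (by linarith) hM
  have hlog0 : 0 ≤ Real.log (1 + M / l) := Real.log_nonneg (by
    have : 0 ≤ M / l := by positivity
    linarith)
  have hcont : Continuous fun u : ℝ => (l + |u|)⁻¹ := by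
    apply Continuous.inv₀ (continuous_const.add continuous_abs)
    intro x; exact (add_pos_of_pos_of_nonneg hl (abs_nonneg _)).ne'
  have pos_side : ∀ α β : ℝ, 0 ≤ α → α ≤ β → β - α ≤ M →
      (∫ u in α..β, (l + |u|)⁻¹) ≤ Real.log (1 + M / l) := by
    intro α β hα hαβ hd
    have hcongr : (∫ u in α..β, (l + |u|)⁻¹) = ∫ u in α..β, (l + u)⁻¹ := by
      apply integral_congr
      intro u hu
      rw [Set.uIcc_of_le hαβ] at hu
      simp only
      rw [abs_of_nonneg (le_trans hα hu.1)]
    rw [hcongr]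
    exact posInt hl hM0 hα hαβ hd
  have neg_side : ∀ α β : ℝ, α ≤ β → β ≤ 0 → β - α ≤ M →
      (∫ u in α..β, (l + |u|)⁻¹) ≤ Real.log (1 + M / l) := by
    intro α β hαβ hβ hd
    have hcongr : (∫ u in α..β, (l + |u|)⁻¹) = ∫ u in α..β, (l + -u)⁻¹ := by
      apply integral_congr
      intro u hu
      rw [Set.uIcc_of_le hαβ] at hu
      simp only
      rw [abs_of_nonpos (le_trans hu.2 hβ)]
    rw [hcongr]
    have h2 : (∫ u in α..β, (l + -u)⁻¹) = ∫ v in -β..-α, (l + v)⁻¹ :=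
      integral_comp_neg (fun v => (l + v)⁻¹)
    rw [h2]
    exact posInt hl hM0 (by linarith) (by linarith) (by linarith)
  rcases le_total b 0 with hb | hb
  · calc (∫ u in a..b, (l + |u|)⁻¹) ≤ Real.log (1 + M / l) := neg_side a b hab hb hM
    _ ≤ 2 * Real.log (1 + M / l) := by linarith
  rcases le_total 0 a with ha | ha
  · calc (∫ u in a..b, (l + |u|)⁻¹) ≤ Real.log (1 + M / l) := pos_side a b ha hab hM
    _ ≤ 2 * Real.log (1 + M / l) := by linarith
  · have hi1 : IntervalIntegrable (fun u : ℝ => (l + |u|)⁻¹) volume a 0 :=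
      hcont.intervalIntegrable _ _
    have hi2 : IntervalIntegrable (fun u : ℝ => (l + |u|)⁻¹) volume 0 b :=
      hcont.intervalIntegrable _ _
    rw [← integral_add_adjacent_intervals hi1 hi2]
    have e1 := neg_side a 0 ha (le_refl 0) (by linarith)
    have e2 := pos_side 0 b (le_refl 0) hb (by linarith)
    linarith

/-- Key one-dimensional bound. -/
lemma oneDim {l K : ℝ} (hl : 0 < l) (hK : 0 < K) (c : ℝ) :
    ∫⁻ t in Set.Icc (-K) K, ENNReal.ofReal (l + |t + c|)⁻¹ ≤
      ENNReal.ofReal (2 * Real.log (1 + 2 * K / l)) := by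
  have hcont : Continuous fun t : ℝ => (l + |t + c|)⁻¹ := by
    apply Continuous.inv₀ (continuous_const.add ((continuous_id.add continuous_const).abs))
    intro x; exact (add_pos_of_pos_of_nonneg hl (abs_nonneg _)).ne'
  have hint : IntegrableOn (fun t : ℝ => (l + |t + c|)⁻¹) (Set.Icc (-K) K) :=
    hcont.integrableOn_Icc
  rw [← ofReal_integral_eq_lintegral_ofReal hint
    (Filter.Eventually.of_forall fun t => by positivity)]
  apply ENNReal.ofReal_le_ofReal
  have h1 : (∫ t in Set.Icc (-K) K, (l + |t + c|)⁻¹) = ∫ t in Set.Ioc (-K) K, (l + |t + c|)⁻¹ :=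
    integral_Icc_eq_integral_Ioc
  have h2 : (∫ t in (-K)..K, (l + |t + c|)⁻¹) = ∫ t in Set.Ioc (-K) K, (l + |t + c|)⁻¹ :=
    integral_of_le (by linarith)
  rw [h1, ← h2]
  have h3 : (∫ t in (-K)..K, (l + |t + c|)⁻¹) = ∫ u in (-K + c)..(K + c), (l + |u|)⁻¹ :=
    integral_comp_add_right (fun u => (l + |u|)⁻¹) c
  rw [h3]
  exact realInt hl (by linarith) (by linarith)

open MeasureTheory Finset
open scoped ENNReal

lemma restrict_pi_box {ι : Type*} [Fintype ι] (K : ℝ) :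
    (volume : Measure (ι → ℝ)).restrict (Set.univ.pi fun _ => Set.Icc (-K) K)
      = Measure.pi (fun _ : ι => (volume : Measure ℝ).restrict (Set.Icc (-K) K)) := by
  refine ((Measure.pi_eq (μ := fun _ : ι => (volume : Measure ℝ).restrict (Set.Icc (-K) K)))
    fun s hs => ?_).symm
  rw [Measure.restrict_apply (MeasurableSet.univ_pi hs)]
  rw [← Set.pi_inter_distrib]
  rw [volume_pi_pi]
  simp_rw [Measure.restrict_apply (hs _)]

lemma marg_bound {ι : Type*} [Fintype ι] [DecidableEq ι] [LinearOrder ι]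
    {K l : ℝ} (hK : 0 < K) (hl : 0 < l)
    (S : ι → (ι → ℝ) → ℝ)
    (hmeas : ∀ m, Measurable (S m))
    (hupd : ∀ m k t, S m (Function.update k m t) = S m k + (t - k m))
    (hind : ∀ m' m : ι, m' < m → ∀ k t, S m' (Function.update k m t) = S m' k)
    (s : Finset ι) :
    ∀ x, (MeasureTheory.lmarginal (fun _ => (volume : Measure ℝ).restrict (Set.Icc (-K) K)) s
        (fun k => ∏ m ∈ s, ENNReal.ofReal (l + |S m k|)⁻¹)) x
      ≤ ENNReal.ofReal (2 * Real.log (1 + 2 * K / l)) ^ s.card := by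
  have hgm : ∀ m : ι, Measurable fun k : ι → ℝ => ENNReal.ofReal (l + |S m k|)⁻¹ :=
    fun m => ((measurable_const.add (hmeas m).abs).inv).ennreal_ofReal
  induction s using Finset.induction_on_max with
  | empty =>
    intro x
    rw [MeasureTheory.lmarginal_empty (fun _ : ι => (volume : Measure ℝ).restrict (Set.Icc (-K) K))]
    simp
  | insert a t hta ih =>
    intro x
    have hat : a ∉ t := fun h => lt_irrefl a (hta a h)
    set B := ENNReal.ofReal (2 * Real.log (1 + 2 * K / l)) with hB
    set μ : ι → Measure ℝ := fun _ => (volume : Measure ℝ).restrict (Set.Icc (-K) K) with hμ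
    set f : (ι → ℝ) → ℝ≥0∞ := fun k => ∏ m ∈ insert a t, ENNReal.ofReal (l + |S m k|)⁻¹ with hf
    have hmf : Measurable f := Finset.measurable_prod _ fun m _ => hgm m
    have hsplit : MeasureTheory.lmarginal μ (insert a t) f
        = MeasureTheory.lmarginal μ t (MeasureTheory.lmarginal μ {a} f) := by
      rw [Finset.insert_eq]
      exact MeasureTheory.lmarginal_union' μ f hmf
        (Finset.disjoint_singleton_left.mpr hat)
    have h1 : ∀ y, MeasureTheory.lmarginal μ {a} f y
        ≤ (∏ m ∈ t, ENNReal.ofReal (l + |S m y|)⁻¹) * B := by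
      intro y
      rw [MeasureTheory.lmarginal_singleton]
      have hfy : ∀ τ, f (Function.update y a τ)
          = (∏ m ∈ t, ENNReal.ofReal (l + |S m y|)⁻¹)
            * ENNReal.ofReal (l + |τ + (S a y - y a)|)⁻¹ := by
        intro τ
        simp only [hf]
        rw [Finset.prod_insert hat]
        have hSa : S a (Function.update y a τ) = τ + (S a y - y a) := by
          rw [hupd]; ring
        rw [hSa, mul_comm]
        congr 1
        exact Finset.prod_congr rfl fun m hm => by rw [hind m a (hta m hm)]
      simp_rw [hfy]
      rw [lintegral_const_mul' _ _ (by
        exact (ENNReal.prod_lt_top fun m _ => ENNReal.ofReal_lt_top).ne)]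
      exact mul_le_mul_right (oneDim hl hK (S a y - y a)) _
    calc (MeasureTheory.lmarginal μ (insert a t) f) x
        ≤ (MeasureTheory.lmarginal μ t
            (fun y => (∏ m ∈ t, ENNReal.ofReal (l + |S m y|)⁻¹) * B)) x := by
          rw [hsplit]; exact MeasureTheory.lmarginal_mono h1 x
      _ = (MeasureTheory.lmarginal μ t
            (fun y => ∏ m ∈ t, ENNReal.ofReal (l + |S m y|)⁻¹)) x * B := by
          simp only [MeasureTheory.lmarginal]
          rw [lintegral_mul_const' _ _ ENNReal.ofReal_ne_top]
      _ ≤ B ^ t.card * B := mul_le_mul_left (ih x) B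
      _ = B ^ (insert a t).card := by
          rw [Finset.card_insert_of_notMem hat, pow_succ]

section CombineLemmas
variable {n : ℕ} (σ : Equiv.Perm (Fin n)) (hσ : ∀ j, σ (σ j) = j)
  (kA : {j : Fin n // σ j = j} → ℝ) (kL : {j : Fin n // j < σ j} → ℝ)

lemma combine_fixed {j : Fin n} (h : σ j = j) : combine σ hσ kA kL j = kA ⟨j, h⟩ := dif_pos h

lemma combine_left {j : Fin n} (h : j < σ j) : combine σ hσ kA kL j = kL ⟨j, h⟩ := by
  simp only [combine]
  rw [dif_neg (ne_of_gt h), dif_pos h]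

lemma combine_right {j : Fin n} (h : σ j < j) :
    combine σ hσ kA kL j = -kL ⟨σ j, by rw [hσ]; exact h⟩ := by
  simp only [combine]
  rw [dif_neg (ne_of_lt h), dif_neg (not_lt.mpr h.le)]

lemma combine_measurable (kA : {j : Fin n // σ j = j} → ℝ) (i : Fin n) :
    Measurable fun kL : {j : Fin n // j < σ j} → ℝ => combine σ hσ kA kL i := by
  by_cases h : σ i = i
  · simp only [combine, dif_pos h]; exact measurable_const
  by_cases h' : i < σ i
  · simp only [combine, dif_neg h, dif_pos h']; exact measurable_pi_apply _
  · simp only [combine, dif_neg h, dif_neg h']; exact (measurable_pi_apply _).neg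

lemma combine_update_ne (m : {j : Fin n // j < σ j}) (t : ℝ) {i : Fin n}
    (h1 : i ≠ m.val) (h2 : i ≠ σ m.val) :
    combine σ hσ kA (Function.update kL m t) i = combine σ hσ kA kL i := by
  by_cases h : σ i = i
  · simp only [combine, dif_pos h]
  by_cases h' : i < σ i
  · simp only [combine, dif_neg h, dif_pos h']
    have hne : (⟨i, h'⟩ : {j : Fin n // j < σ j}) ≠ m := fun hc => h1 (Subtype.ext_iff.mp hc)
    exact Function.update_of_ne hne t kL
  · simp only [combine, dif_neg h, dif_neg h']
    have hne : (⟨σ i, by rw [hσ]; exact lt_of_le_of_ne (not_lt.mp h') h⟩ :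
        {j : Fin n // j < σ j}) ≠ m := by
      intro hc
      have : σ i = m.val := congrArg Subtype.val hc
      exact h2 (by rw [← this]; exact (hσ i).symm)
    rw [Function.update_of_ne hne]

lemma combine_update_self (m : {j : Fin n // j < σ j}) (t : ℝ) :
    combine σ hσ kA (Function.update kL m t) m.val = t := by
  have h := m.prop
  simp only [combine, dif_neg (ne_of_gt h), dif_pos h]
  rw [show (⟨(m : Fin n), h⟩ : {j : Fin n // j < σ j}) = m from Subtype.ext rfl,
    Function.update_self]

lemma pS_update_self (m : {j : Fin n // j < σ j}) (t : ℝ) :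
    partialSum (combine σ hσ kA (Function.update kL m t)) m.val
      = partialSum (combine σ hσ kA kL) m.val + (t - kL m) := by
  unfold partialSum
  have hmem : (m : Fin n) ∈ Finset.Iic (m : Fin n) := Finset.mem_Iic.mpr le_rfl
  rw [← Finset.sum_erase_add _ _ hmem, ← Finset.sum_erase_add _ _ hmem]
  have hcongr : ∀ i ∈ (Finset.Iic (m : Fin n)).erase (m : Fin n),
      combine σ hσ kA (Function.update kL m t) i = combine σ hσ kA kL i := by
    intro i hi
    obtain ⟨hne, hle⟩ := Finset.mem_erase.mp hi
    refine combine_update_ne σ hσ kA kL m t hne ?_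
    have : i ≤ (m : Fin n) := Finset.mem_Iic.mp hle
    exact ne_of_lt (lt_of_le_of_lt this m.prop)
  rw [Finset.sum_congr rfl hcongr, combine_update_self σ hσ kA kL m t,
    combine_left σ hσ kA kL m.prop,
    show (⟨(m : Fin n), m.prop⟩ : {j : Fin n // j < σ j}) = m from Subtype.ext rfl]
  ring

lemma pS_update_ne {j : Fin n} (m : {j : Fin n // j < σ j}) (t : ℝ) (hj : j < m.val) :
    partialSum (combine σ hσ kA (Function.update kL m t)) j
      = partialSum (combine σ hσ kA kL) j := by
  unfold partialSum
  refine Finset.sum_congr rfl fun i hi => ?_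
  have hle : i ≤ j := Finset.mem_Iic.mp hi
  refine combine_update_ne σ hσ kA kL m t ?_ ?_
  · exact ne_of_lt (lt_of_le_of_lt hle hj)
  · exact ne_of_lt (lt_of_le_of_lt hle (lt_trans hj m.prop))

lemma combine_pair_cancel (b : Fin n) (hb : b < σ b) :
    combine σ hσ kA kL b + combine σ hσ kA kL (σ b) = 0 := by
  have h2 : σ (σ b) < σ b := by rw [hσ]; exact hb
  rw [combine_left σ hσ kA kL hb, combine_right σ hσ kA kL h2]
  rw [add_neg_eq_zero]
  congr 1
  exact Subtype.ext (hσ b).symm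

lemma pS_total (q₀ : {j : Fin n // σ j = j}) (hq : ∀ y : {j : Fin n // σ j = j}, y = q₀)
    {j : Fin n} (hj : ∀ i : Fin n, i ≤ j) :
    partialSum (combine σ hσ kA kL) j = kA q₀ := by
  have hIic : Finset.Iic j = Finset.univ := by
    ext i; simp [Finset.mem_Iic, hj i]
  rw [partialSum, hIic,
    ← Finset.sum_filter_add_sum_filter_not Finset.univ (fun i => σ i = i)]
  have h1 : Finset.univ.filter (fun i : Fin n => σ i = i) = {(q₀ : Fin n)} := by
    ext i
    simp only [Finset.mem_filter, Finset.mem_univ, true_and, Finset.mem_singleton]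
    constructor
    · intro h; exact congrArg Subtype.val (hq ⟨i, h⟩)
    · intro h; rw [h]; exact q₀.prop
  have h2 : ∑ i ∈ Finset.univ.filter (fun i : Fin n => ¬σ i = i),
      combine σ hσ kA kL i = 0 := by
    refine Finset.sum_involution (fun a _ => σ a) ?_ ?_ ?_ ?_
    · intro a ha
      have hna : ¬σ a = a := by simpa using (Finset.mem_filter.mp ha).2
      rcases lt_or_gt_of_ne (fun h : a = σ a => hna h.symm) with h | h
      · exact combine_pair_cancel σ hσ kA kL a h
      · have hkey := combine_pair_cancel σ hσ kA kL (σ a)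
          (show σ a < σ (σ a) by rw [hσ]; exact h)
        rw [hσ a] at hkey
        linarith
    · intro a ha _
      simpa using (Finset.mem_filter.mp ha).2
    · intro a ha
      simp only [Finset.mem_filter, Finset.mem_univ, true_and] at ha ⊢
      intro hc
      rw [hσ a] at hc
      exact ha hc.symm
    · intro a _
      exact hσ a
  rw [h1, h2, add_zero, Finset.sum_singleton, combine_fixed σ hσ kA kL q₀.prop,
    Subtype.coe_eta]

open MeasureTheory Finset
open scoped ENNReal

lemma cardL {n e : ℕ} (hn : n = 2 * e + 1) (σ : Equiv.Perm (Fin n)) (hσ : ∀ j, σ (σ j) = j)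
    (hfree : Fintype.card {j : Fin n // σ j = j} = 1) :
    (Finset.univ.filter fun j : Fin n => j < σ j).card = e := by
  classical
  have hfix : (Finset.univ.filter fun j : Fin n => σ j = j).card = 1 := by
    rw [← Fintype.card_subtype]; exact hfree
  have hLR : (Finset.univ.filter fun j : Fin n => j < σ j).card
      = (Finset.univ.filter fun j : Fin n => σ j < j).card := by
    apply Finset.card_bij (fun a _ => σ a)
    · intro a ha
      simp only [Finset.mem_filter, Finset.mem_univ, true_and] at ha ⊢
      rw [hσ]; exact ha
    · intro a _ b _ hab
      exact σ.injective hab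
    · intro b hb
      simp only [Finset.mem_filter, Finset.mem_univ, true_and] at hb
      refine ⟨σ b, ?_, hσ b⟩
      simp only [Finset.mem_filter, Finset.mem_univ, true_and]
      rw [hσ]; exact hb
  have t1 := Finset.card_filter_add_card_filter_not
    (s := (Finset.univ : Finset (Fin n))) (p := fun j => σ j = j)
  have t2 := Finset.card_filter_add_card_filter_not
    (s := Finset.univ.filter fun j : Fin n => ¬σ j = j) (p := fun j => j < σ j)
  have e1 : (Finset.univ.filter fun j : Fin n => ¬σ j = j).filter (fun j => j < σ j)
      = Finset.univ.filter fun j : Fin n => j < σ j := by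
    rw [Finset.filter_filter]
    apply Finset.filter_congr
    intro j _
    simp only [and_iff_right_iff_imp]
    exact fun h => ne_of_gt h
  have e2 : (Finset.univ.filter fun j : Fin n => ¬σ j = j).filter (fun j => ¬j < σ j)
      = Finset.univ.filter fun j : Fin n => σ j < j := by
    rw [Finset.filter_filter]
    apply Finset.filter_congr
    intro j _
    constructor
    · rintro ⟨h1, h2⟩; exact lt_of_le_of_ne (not_lt.mp h2) h1
    · intro h; exact ⟨ne_of_lt h, not_lt.mpr h.le⟩
  rw [e1, e2] at t2
  have hcard : (Finset.univ : Finset (Fin n)).card = n := by simp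
  omega

/-- Let `n = 2e + 1` be odd and let a pairing structure on `{1,…,n}` with
exactly one free index and `e` pairs be given; let `K > 0`. Then there is a constant
`C > 0`, depending only on `n` and `K`, such that for all `λ ∈ (0,1]`,
`∫_{[-K,K]^{A∪L}} Π_{j=1}^n (λ+|S_j|)⁻¹ d(k_m)_{m∈A∪L} ≤ C λ^{-e} (1 + log(1/λ))^{e+1}`. -/
theorem stmt18 (e n : ℕ) (hn : n = 2 * e + 1)
    (σ : Equiv.Perm (Fin n)) (hσ : ∀ j, σ (σ j) = j)
    (hfree : Fintype.card {j : Fin n // σ j = j} = 1)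
    (K : ℝ) (hK : 0 < K) :
    ∃ C > (0:ℝ), ∀ l ∈ Set.Ioc (0:ℝ) 1,
      ∫⁻ kA : {j : Fin n // σ j = j} → ℝ in
          Set.univ.pi (fun _ => Set.Icc (-K) K),
        ∫⁻ kL : {j : Fin n // j < σ j} → ℝ in
            Set.univ.pi (fun _ => Set.Icc (-K) K),
          ENNReal.ofReal
            (∏ j : Fin n, (l + |partialSum (combine σ hσ kA kL) j|)⁻¹)
      ≤ ENNReal.ofReal (C * (l ^ e)⁻¹ * (1 + Real.log (1 / l)) ^ (e + 1)) := by
  classical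
  subst hn
  obtain ⟨q₀, hq₀⟩ := Fintype.card_eq_one_iff.mp hfree
  have hlogK : 0 ≤ Real.log (1 + 2 * K) := Real.log_nonneg (by linarith)
  set M : ℝ := 2 * (1 + Real.log (1 + 2 * K)) with hM
  have hM0 : 0 < M := by rw [hM]; linarith
  refine ⟨M ^ (e + 1), pow_pos hM0 _, ?_⟩
  intro l hl
  obtain ⟨hl0, hl1⟩ := hl
  set Bl : ℝ := 2 * Real.log (1 + 2 * K / l) with hBl
  have hBl0 : 0 ≤ Bl := by
    have : (0:ℝ) ≤ Real.log (1 + 2 * K / l) := Real.log_nonneg (by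
      have : 0 ≤ 2 * K / l := by positivity
      linarith)
    rw [hBl]; linarith
  have hlog1l : 0 ≤ Real.log (1 / l) := Real.log_nonneg (by rw [le_div_iff₀ hl0]; linarith)
  have hBlM : Bl ≤ M * (1 + Real.log (1 / l)) := by
    have e1 : Real.log (1 + 2 * K / l) ≤ Real.log ((1 + 2 * K) / l) := by
      apply Real.log_le_log (by positivity)
      rw [le_div_iff₀ hl0]
      have h2Kl : 2 * K / l * l = 2 * K := by field_simp
      nlinarith
    have e2 : Real.log ((1 + 2 * K) / l) = Real.log (1 + 2 * K) + Real.log (1 / l) := by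
      rw [Real.log_div (by linarith) (ne_of_gt hl0),
        Real.log_div one_ne_zero (ne_of_gt hl0), Real.log_one]
      ring
    rw [hBl, hM]
    nlinarith
  -- index types
  set filterL : Finset (Fin (2 * e + 1)) := Finset.univ.filter (fun j => j < σ j) with hfL
  have hlastmem : Fin.last (2 * e) ∉ filterL := by
    simp only [hfL, Finset.mem_filter, Finset.mem_univ, true_and]
    exact not_lt.mpr (Fin.le_last _)
  set T : Finset (Fin (2 * e + 1)) := insert (Fin.last (2 * e)) filterL with hT
  have hcardfL : filterL.card = e := cardL rfl σ hσ hfree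
  have hcardT : T.card = e + 1 := by
    rw [hT, Finset.card_insert_of_notMem hlastmem, hcardfL]
  have hcardC : (Finset.univ \ T).card = e := by
    rw [Finset.card_sdiff_of_subset (Finset.subset_univ T), hcardT]
    simp only [Finset.card_univ, Fintype.card_fin]
    omega
  -- pointwise bound
  have hpoint : ∀ (kA : {j : Fin (2 * e + 1) // σ j = j} → ℝ)
      (kL : {j : Fin (2 * e + 1) // j < σ j} → ℝ),
      ENNReal.ofReal (∏ j : Fin (2 * e + 1),
          (l + |partialSum (combine σ hσ kA kL) j|)⁻¹)
        ≤ ENNReal.ofReal l⁻¹ ^ e * (ENNReal.ofReal (l + |kA q₀|)⁻¹ *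
            ∏ m : {j : Fin (2 * e + 1) // j < σ j},
              ENNReal.ofReal (l + |partialSum (combine σ hσ kA kL) m.val|)⁻¹) := by
    intro kA kL
    rw [ENNReal.ofReal_prod_of_nonneg (fun i _ => by positivity)]
    rw [← Finset.prod_sdiff (Finset.subset_univ T)]
    apply mul_le_mul ?h1 (le_of_eq ?h2) zero_le zero_le
    case h1 =>
      calc ∏ j ∈ Finset.univ \ T,
            ENNReal.ofReal (l + |partialSum (combine σ hσ kA kL) j|)⁻¹
          ≤ ∏ _j ∈ Finset.univ \ T, ENNReal.ofReal l⁻¹ := by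
            apply Finset.prod_le_prod'
            intro i _
            apply ENNReal.ofReal_le_ofReal
            apply inv_anti₀ hl0
            exact le_add_of_nonneg_right (abs_nonneg _)
        _ = ENNReal.ofReal l⁻¹ ^ e := by rw [Finset.prod_const, hcardC]
    case h2 =>
      rw [hT, Finset.prod_insert hlastmem]
      congr 1
      · rw [pS_total σ hσ kA kL q₀ hq₀ (fun i => Fin.le_last i)]
      · exact Finset.prod_subtype filterL
          (by intro x; simp [hfL]) _
  -- the inner lmarginal bound
  have hSmeas : ∀ (kA : {j : Fin (2 * e + 1) // σ j = j} → ℝ)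
      (m : {j : Fin (2 * e + 1) // j < σ j}),
      Measurable fun kL : {j : Fin (2 * e + 1) // j < σ j} → ℝ =>
        partialSum (combine σ hσ kA kL) m.val := by
    intro kA m
    unfold partialSum
    exact Finset.measurable_sum _ fun i _ => combine_measurable σ hσ kA i
  have hinnerInt : ∀ kA : {j : Fin (2 * e + 1) // σ j = j} → ℝ,
      (∫⁻ kL : {j : Fin (2 * e + 1) // j < σ j} → ℝ in
          Set.univ.pi (fun _ => Set.Icc (-K) K),
        ∏ m : {j : Fin (2 * e + 1) // j < σ j},
          ENNReal.ofReal (l + |partialSum (combine σ hσ kA kL) m.val|)⁻¹)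
        ≤ ENNReal.ofReal Bl ^ e := by
    intro kA
    rw [restrict_pi_box K]
    rw [lintegral_eq_lmarginal_univ (fun _ => (0:ℝ))]
    have := marg_bound hK hl0
      (fun m kL => partialSum (combine σ hσ kA kL) m.val)
      (hSmeas kA)
      (fun m k t => pS_update_self σ hσ kA k m t)
      (fun m' m hlt k t => pS_update_ne σ hσ kA k m t (Subtype.coe_lt_coe.mpr hlt))
      Finset.univ (fun _ => (0:ℝ))
    calc _ ≤ ENNReal.ofReal (2 * Real.log (1 + 2 * K / l)) ^ (Finset.univ :
        Finset {j : Fin (2 * e + 1) // j < σ j}).card := this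
      _ = ENNReal.ofReal Bl ^ e := by
          rw [Finset.card_univ, Fintype.card_subtype, hcardfL]
  -- inner integral bound
  have hinner : ∀ kA : {j : Fin (2 * e + 1) // σ j = j} → ℝ,
      (∫⁻ kL : {j : Fin (2 * e + 1) // j < σ j} → ℝ in
          Set.univ.pi (fun _ => Set.Icc (-K) K),
        ENNReal.ofReal (∏ j : Fin (2 * e + 1),
          (l + |partialSum (combine σ hσ kA kL) j|)⁻¹))
      ≤ (ENNReal.ofReal l⁻¹ ^ e * ENNReal.ofReal Bl ^ e) *
          ENNReal.ofReal (l + |kA q₀|)⁻¹ := by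
    intro kA
    calc (∫⁻ kL : {j : Fin (2 * e + 1) // j < σ j} → ℝ in
          Set.univ.pi (fun _ => Set.Icc (-K) K),
        ENNReal.ofReal (∏ j : Fin (2 * e + 1),
          (l + |partialSum (combine σ hσ kA kL) j|)⁻¹))
        ≤ ∫⁻ kL : {j : Fin (2 * e + 1) // j < σ j} → ℝ in
            Set.univ.pi (fun _ => Set.Icc (-K) K),
          (ENNReal.ofReal l⁻¹ ^ e * ENNReal.ofReal (l + |kA q₀|)⁻¹) *
            ∏ m : {j : Fin (2 * e + 1) // j < σ j},
              ENNReal.ofReal (l + |partialSum (combine σ hσ kA kL) m.val|)⁻¹ := by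
          apply lintegral_mono
          intro kL
          calc ENNReal.ofReal (∏ j : Fin (2 * e + 1),
              (l + |partialSum (combine σ hσ kA kL) j|)⁻¹)
              ≤ ENNReal.ofReal l⁻¹ ^ e * (ENNReal.ofReal (l + |kA q₀|)⁻¹ *
                ∏ m : {j : Fin (2 * e + 1) // j < σ j},
                  ENNReal.ofReal (l + |partialSum (combine σ hσ kA kL) m.val|)⁻¹) :=
                hpoint kA kL
            _ = (ENNReal.ofReal l⁻¹ ^ e * ENNReal.ofReal (l + |kA q₀|)⁻¹) *
                ∏ m : {j : Fin (2 * e + 1) // j < σ j},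
                  ENNReal.ofReal (l + |partialSum (combine σ hσ kA kL) m.val|)⁻¹ := by
                rw [mul_assoc]
      _ = (ENNReal.ofReal l⁻¹ ^ e * ENNReal.ofReal (l + |kA q₀|)⁻¹) *
            ∫⁻ kL : {j : Fin (2 * e + 1) // j < σ j} → ℝ in
              Set.univ.pi (fun _ => Set.Icc (-K) K),
            ∏ m : {j : Fin (2 * e + 1) // j < σ j},
              ENNReal.ofReal (l + |partialSum (combine σ hσ kA kL) m.val|)⁻¹ := by
          rw [lintegral_const_mul' _ _
            (ENNReal.mul_ne_top (ENNReal.pow_ne_top ENNReal.ofReal_ne_top)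
              ENNReal.ofReal_ne_top)]
      _ ≤ (ENNReal.ofReal l⁻¹ ^ e * ENNReal.ofReal (l + |kA q₀|)⁻¹) *
            ENNReal.ofReal Bl ^ e := mul_le_mul_right (hinnerInt kA) _
      _ = (ENNReal.ofReal l⁻¹ ^ e * ENNReal.ofReal Bl ^ e) *
            ENNReal.ofReal (l + |kA q₀|)⁻¹ := by ring
  -- outer integral
  have houter : (∫⁻ kA : {j : Fin (2 * e + 1) // σ j = j} → ℝ in
        Set.univ.pi (fun _ => Set.Icc (-K) K),
      ENNReal.ofReal (l + |kA q₀|)⁻¹) ≤ ENNReal.ofReal Bl := by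
    have hprod : ∀ kA : {j : Fin (2 * e + 1) // σ j = j} → ℝ,
        ENNReal.ofReal (l + |kA q₀|)⁻¹
          = ∏ m ∈ (Finset.univ : Finset {j : Fin (2 * e + 1) // σ j = j}),
              ENNReal.ofReal (l + |kA m|)⁻¹ := by
      intro kA
      have huniv : (Finset.univ : Finset {j : Fin (2 * e + 1) // σ j = j}) = {q₀} := by
        ext y; simp [hq₀ y]
      rw [huniv, Finset.prod_singleton]
    simp_rw [hprod]
    rw [restrict_pi_box K]
    rw [lintegral_eq_lmarginal_univ (fun _ => (0:ℝ))]
    have := marg_bound hK hl0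
      (fun (m : {j : Fin (2 * e + 1) // σ j = j}) (kA : _ → ℝ) => kA m)
      (fun m => measurable_pi_apply m)
      (fun m k t => by show (Function.update k m t) m = k m + (t - k m); rw [Function.update_self]; ring)
      (fun m' m hlt k t => (lt_irrefl q₀ (by rwa [hq₀ m', hq₀ m] at hlt)).elim)
      Finset.univ (fun _ => (0:ℝ))
    calc _ ≤ ENNReal.ofReal (2 * Real.log (1 + 2 * K / l)) ^ (Finset.univ :
        Finset {j : Fin (2 * e + 1) // σ j = j}).card := this
      _ = ENNReal.ofReal Bl := by
          rw [Finset.card_univ, hfree, pow_one]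
  -- put it together
  calc (∫⁻ kA : {j : Fin (2 * e + 1) // σ j = j} → ℝ in
        Set.univ.pi (fun _ => Set.Icc (-K) K),
      ∫⁻ kL : {j : Fin (2 * e + 1) // j < σ j} → ℝ in
          Set.univ.pi (fun _ => Set.Icc (-K) K),
        ENNReal.ofReal
          (∏ j : Fin (2 * e + 1), (l + |partialSum (combine σ hσ kA kL) j|)⁻¹))
      ≤ ∫⁻ kA : {j : Fin (2 * e + 1) // σ j = j} → ℝ in
          Set.univ.pi (fun _ => Set.Icc (-K) K),
        (ENNReal.ofReal l⁻¹ ^ e * ENNReal.ofReal Bl ^ e) *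
          ENNReal.ofReal (l + |kA q₀|)⁻¹ := lintegral_mono fun kA => hinner kA
    _ = (ENNReal.ofReal l⁻¹ ^ e * ENNReal.ofReal Bl ^ e) *
          ∫⁻ kA : {j : Fin (2 * e + 1) // σ j = j} → ℝ in
            Set.univ.pi (fun _ => Set.Icc (-K) K),
          ENNReal.ofReal (l + |kA q₀|)⁻¹ := by
        rw [lintegral_const_mul' _ _
          (ENNReal.mul_ne_top (ENNReal.pow_ne_top ENNReal.ofReal_ne_top)
            (ENNReal.pow_ne_top ENNReal.ofReal_ne_top))]
    _ ≤ (ENNReal.ofReal l⁻¹ ^ e * ENNReal.ofReal Bl ^ e) * ENNReal.ofReal Bl :=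
        mul_le_mul_right houter _
    _ ≤ ENNReal.ofReal (M ^ (e + 1) * (l ^ e)⁻¹ * (1 + Real.log (1 / l)) ^ (e + 1)) := by
        rw [← ENNReal.ofReal_pow (by positivity : (0:ℝ) ≤ l⁻¹),
          ← ENNReal.ofReal_pow hBl0, ← ENNReal.ofReal_mul (by positivity),
          ← ENNReal.ofReal_mul (by positivity)]
        apply ENNReal.ofReal_le_ofReal
        have hpow : Bl ^ e * Bl = Bl ^ (e + 1) := by rw [pow_succ]
        calc l⁻¹ ^ e * Bl ^ e * Bl = l⁻¹ ^ e * Bl ^ (e + 1) := by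
              rw [mul_assoc, hpow]
          _ ≤ l⁻¹ ^ e * (M * (1 + Real.log (1 / l))) ^ (e + 1) := by
              apply mul_le_mul_of_nonneg_left _ (by positivity)
              exact pow_le_pow_left₀ hBl0 hBlM _
          _ = M ^ (e + 1) * (l ^ e)⁻¹ * (1 + Real.log (1 / l)) ^ (e + 1) := by
              rw [mul_pow, ← inv_pow]
              ring
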